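/- Let n ≥ 3 and a ≥ 0 be natural numbers, and let H_a be the ℝ-submodule of MvPolynomial (Fin n) ℝ consisting of harmonic polynomials homogeneous of degree a. Then (n − 2)! * Module.finrank ℝ H_a = (2a + n − 2) * ∏_{j=1}^{n−3} (a + j). -/

import Mathlib

open MvPolynomial

/-- The space of harmonic polynomials homogeneous of degree `a` in `n` real variables. -/
noncomputable def harmonicHomogeneous (n a : ℕ) : Submodule ℝ (MvPolynomial (Fin n) ℝ) :=
  (homogeneousSubmodule (Fin n) ℝ a) ⊓
    LinearMap.ker (∑ i : Fin n, ((pderiv (R := ℝ) i).toLinearMap ∘ₗ (pderiv i).toLinearMap))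


def hset (n a : ℕ) : Set (Fin n →₀ ℕ) := {d | d.degree = a}

noncomputable instance ft (n a : ℕ) : Fintype (hset n a) :=
  Set.Finite.fintype ((Finsupp.finite_of_degree_le a).subset (fun _ hd => le_of_eq hd))

theorem deg_card {α : Type*} (f : α →₀ ℕ) : f.degree = Multiset.card (Finsupp.toMultiset f) := by
  simp [Finsupp.card_toMultiset, Finsupp.degree, Finsupp.sum]
  rfl

noncomputable def degEquiv (n a : ℕ) : hset n a ≃ Sym (Fin n) a where
  toFun d := ⟨Finsupp.toMultiset d.1, by rw [← deg_card]; exact d.2⟩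
  invFun m := ⟨Multiset.toFinsupp m.1, by
    show Finsupp.degree _ = a
    classical
    rw [deg_card, Multiset.toFinsupp_toMultiset, m.2]⟩
  left_inv d := by
    classical
    ext : 1
    exact Finsupp.toMultiset_toFinsupp d.1
  right_inv m := by ext : 1; exact Multiset.toFinsupp_toMultiset m.1

theorem card_deg (n a : ℕ) : Fintype.card (hset n a) = (n + a - 1).choose a := by
  classical
  rw [Fintype.card_congr (degEquiv n a), Sym.card_sym_eq_multichoose, Nat.multichoose_eq,
    Fintype.card_fin]

theorem finrank_hom (n a : ℕ) :
    Module.finrank ℝ (homogeneousSubmodule (Fin n) ℝ a) = (n + a - 1).choose a := by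
  have h : homogeneousSubmodule (Fin n) ℝ a = restrictSupport ℝ (hset n a) :=
    homogeneousSubmodule_eq_finsupp_supported (Fin n) ℝ a
  rw [h, Module.finrank_eq_card_basis (basisRestrictSupport ℝ _), card_deg n a]

instance fd_hom (n a : ℕ) : FiniteDimensional ℝ (homogeneousSubmodule (Fin n) ℝ a) := by
  have h : homogeneousSubmodule (Fin n) ℝ a = restrictSupport ℝ (hset n a) :=
    homogeneousSubmodule_eq_finsupp_supported (Fin n) ℝ a
  rw [h]
  exact Module.Finite.of_basis (basisRestrictSupport ℝ _)


theorem Finsupp.degree_add' {α : Type*} (f g : α →₀ ℕ) :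
    (f + g).degree = f.degree + g.degree := by
  simp [deg_card, Finsupp.toMultiset_add]

theorem Finsupp.degree_single' {α : Type*} (i : α) (k : ℕ) :
    (Finsupp.single i k).degree = k := by
  simp [deg_card, Finsupp.toMultiset_single]

theorem sub_single_add {n : ℕ} (d : Fin n →₀ ℕ) (i : Fin n) (h : d i ≠ 0) :
    (d - Finsupp.single i 1) + Finsupp.single i 1 = d := by
  ext j
  simp only [Finsupp.coe_add, Finsupp.coe_tsub, Pi.add_apply, Pi.sub_apply]
  rcases eq_or_ne i j with rfl | hj
  · simp only [Finsupp.single_eq_same]; omega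
  · simp [Finsupp.single_eq_of_ne' hj]

theorem degree_sub_single {n : ℕ} (d : Fin n →₀ ℕ) (i : Fin n) (h : d i ≠ 0) :
    (d - Finsupp.single i 1).degree + 1 = d.degree := by
  conv_rhs => rw [← sub_single_add d i h]
  rw [Finsupp.degree_add', Finsupp.degree_single']

theorem pderiv_isHomogeneous {n m : ℕ} (i : Fin n) {p : MvPolynomial (Fin n) ℝ}
    (hp : p.IsHomogeneous (m + 1)) : (pderiv i p).IsHomogeneous m := by
  rw [p.as_sum, map_sum]
  apply IsHomogeneous.sum
  intro d hd
  rw [pderiv_monomial]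
  by_cases hdi : d i = 0
  · rw [hdi]; simp only [Nat.cast_zero, mul_zero, map_zero]; exact isHomogeneous_zero _ _ _
  · apply isHomogeneous_monomial
    have hdeg : d.degree = m + 1 := by
      rw [Finsupp.degree_eq_weight_one]; exact hp (mem_support_iff.mp hd)
    have := degree_sub_single d i hdi
    omega



variable {n : ℕ}

theorem sub_single_add' {n : ℕ} (d : Fin n →₀ ℕ) (i : Fin n) (h : d i ≠ 0) :
    (d - Finsupp.single i 1) + Finsupp.single i 1 = d := by
  ext j
  simp only [Finsupp.coe_add, Finsupp.coe_tsub, Pi.add_apply, Pi.sub_apply]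
  rcases eq_or_ne i j with rfl | hj
  · simp only [Finsupp.single_eq_same]; omega
  · simp [Finsupp.single_eq_of_ne' hj]

noncomputable def wf (d : Fin n →₀ ℕ) : ℝ := ∏ i : Fin n, ((d i).factorial : ℝ)

theorem wf_pos (d : Fin n →₀ ℕ) : 0 < wf d :=
  Finset.prod_pos fun i _ => by exact_mod_cast (d i).factorial_pos

noncomputable def B (p q : MvPolynomial (Fin n) ℝ) : ℝ :=
  ∑ d ∈ p.support, wf d * coeff d p * coeff d q

theorem B_eq_sum {p : MvPolynomial (Fin n) ℝ} (q : MvPolynomial (Fin n) ℝ)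
    {S : Finset (Fin n →₀ ℕ)} (hS : p.support ⊆ S) :
    B p q = ∑ d ∈ S, wf d * coeff d p * coeff d q := by
  refine Finset.sum_subset hS fun d _ hd => ?_
  rw [notMem_support_iff.mp hd]; ring

theorem B_symm (p q : MvPolynomial (Fin n) ℝ) : B p q = B q p := by
  rw [B_eq_sum q (S := p.support ∪ q.support) Finset.subset_union_left,
    B_eq_sum p (S := p.support ∪ q.support) Finset.subset_union_right]
  exact Finset.sum_congr rfl fun d _ => by ring

theorem B_add_left (p p' q : MvPolynomial (Fin n) ℝ) :
    B (p + p') q = B p q + B p' q := by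
  rw [B_eq_sum q (S := p.support ∪ p'.support) (support_add ..),
    B_eq_sum q (S := p.support ∪ p'.support) Finset.subset_union_left,
    B_eq_sum q (S := p.support ∪ p'.support) Finset.subset_union_right,
    ← Finset.sum_add_distrib]
  exact Finset.sum_congr rfl fun d _ => by rw [coeff_add]; ring

theorem B_sum_right (p : MvPolynomial (Fin n) ℝ) {ι : Type*} (s : Finset ι)
    (f : ι → MvPolynomial (Fin n) ℝ) :
    B p (∑ x ∈ s, f x) = ∑ x ∈ s, B p (f x) := by
  unfold B
  rw [Finset.sum_comm]
  exact Finset.sum_congr rfl fun d _ => by rw [coeff_sum, Finset.mul_sum]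

theorem B_sum_left {ι : Type*} (s : Finset ι) (f : ι → MvPolynomial (Fin n) ℝ)
    (p : MvPolynomial (Fin n) ℝ) :
    B (∑ x ∈ s, f x) p = ∑ x ∈ s, B (f x) p := by
  rw [B_symm, B_sum_right]
  exact Finset.sum_congr rfl fun x _ => B_symm _ _

theorem B_zero_right (p : MvPolynomial (Fin n) ℝ) : B p 0 = 0 := by
  unfold B; simp

theorem B_monomial_left (d : Fin n →₀ ℕ) (c : ℝ) (q : MvPolynomial (Fin n) ℝ) :
    B (monomial d c) q = wf d * c * coeff d q := by
  rw [B_eq_sum q (S := {d}) support_monomial_subset, Finset.sum_singleton, coeff_monomial,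
    if_pos rfl]

theorem wf_add_single (d : Fin n →₀ ℕ) (i : Fin n) :
    wf (d + Finsupp.single i 1) = ((d i : ℝ) + 1) * wf d := by
  unfold wf
  rw [← Finset.prod_erase_mul _ _ (Finset.mem_univ i),
    ← Finset.prod_erase_mul _ _ (Finset.mem_univ i)]
  have h1 : ∀ j ∈ Finset.univ.erase i, ((((d + Finsupp.single i 1) : Fin n →₀ ℕ) j).factorial : ℝ)
      = ((d j).factorial : ℝ) := by
    intro j hj
    rw [Finsupp.add_apply, Finsupp.single_eq_of_ne' (Finset.ne_of_mem_erase hj).symm, add_zero]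
  rw [Finset.prod_congr rfl h1, Finsupp.add_apply, Finsupp.single_eq_same,
    Nat.factorial_succ]
  push_cast
  ring

theorem coeff_pderiv (i : Fin n) (d : Fin n →₀ ℕ) (q : MvPolynomial (Fin n) ℝ) :
    coeff d (pderiv i q) = ((d i : ℝ) + 1) * coeff (d + Finsupp.single i 1) q := by
  induction q using MvPolynomial.induction_on' with
  | monomial s c =>
    rw [pderiv_monomial, coeff_monomial, coeff_monomial]
    by_cases hs : s = d + Finsupp.single i 1
    · subst hs
      rw [if_pos, if_pos rfl]
      · rw [Finsupp.add_apply, Finsupp.single_eq_same]; push_cast; ring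
      · ext j
        rcases eq_or_ne i j with rfl | hj
        · simp
        · simp [Finsupp.single_eq_of_ne' hj]
    · rw [if_neg hs, mul_zero]
      by_cases hsi : s i = 0
      · split
        · rw [hsi]; norm_num
        · rfl
      · rw [if_neg fun he => hs (by rw [← he, sub_single_add' s i hsi])]
  | add p q hp hq => rw [map_add, coeff_add, coeff_add, hp, hq]; ring

theorem B_X_mul (i : Fin n) (p q : MvPolynomial (Fin n) ℝ) :
    B (X i * p) q = B p (pderiv i q) := by
  induction p using MvPolynomial.induction_on' with
  | monomial u c =>
    rw [show X i * monomial u c = monomial (u + Finsupp.single i 1) c by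
        rw [add_comm u, monomial_single_add, pow_one],
      B_monomial_left, B_monomial_left, coeff_pderiv, wf_add_single]
    ring
  | add p p' hp hp' => rw [mul_add, B_add_left, B_add_left, hp, hp']

noncomputable def lap : MvPolynomial (Fin n) ℝ →ₗ[ℝ] MvPolynomial (Fin n) ℝ :=
  ∑ i : Fin n, ((pderiv (R := ℝ) i).toLinearMap ∘ₗ (pderiv i).toLinearMap)

theorem lap_apply (p : MvPolynomial (Fin n) ℝ) :
    lap p = ∑ i : Fin n, pderiv i (pderiv i p) := by
  simp [lap, LinearMap.sum_apply]

theorem B_rsq_mul (q p : MvPolynomial (Fin n) ℝ) :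
    B ((∑ i : Fin n, X i ^ 2) * q) p = B q (lap p) := by
  rw [Finset.sum_mul, B_sum_left, lap_apply, B_sum_right]
  refine Finset.sum_congr rfl fun i _ => ?_
  rw [pow_two, mul_assoc, B_X_mul, B_X_mul]

theorem B_self_pos {p : MvPolynomial (Fin n) ℝ} (hp : p ≠ 0) : 0 < B p p := by
  unfold B
  apply Finset.sum_pos'
  · intro d _
    rw [mul_assoc]
    exact mul_nonneg (wf_pos d).le (mul_self_nonneg _)
  · obtain ⟨d, hd⟩ := exists_coeff_ne_zero hp
    exact ⟨d, mem_support_iff.mpr hd, by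
      rw [mul_assoc]; exact mul_pos (wf_pos d) (mul_self_pos.mpr hd)⟩

theorem eq_zero_of_harmonic_rsq_mul {p q : MvPolynomial (Fin n) ℝ}
    (hlap : lap p = 0) (hpq : p = (∑ i : Fin n, X i ^ 2) * q) : p = 0 := by
  by_contra h
  have h1 : B p p = 0 := by
    rw [show B p p = B ((∑ i : Fin n, X i ^ 2) * q) p from by rw [← hpq], B_rsq_mul, hlap,
      B_zero_right]
  exact absurd h1 (ne_of_gt (B_self_pos h))

variable {n : ℕ}

noncomputable def rsq (n : ℕ) : MvPolynomial (Fin n) ℝ := ∑ i : Fin n, X i ^ 2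

theorem rsq_ne_zero (hn : 0 < n) : rsq n ≠ 0 := by
  intro h
  have : eval (fun _ => (1 : ℝ)) (rsq n) = n := by
    simp [rsq]
  rw [h, map_zero] at this
  exact_mod_cast absurd this.symm (by positivity)

theorem rsq_isHomogeneous : (rsq n).IsHomogeneous 2 :=
  IsHomogeneous.sum _ _ _ fun i _ => (isHomogeneous_X ℝ i).pow 2

theorem lap_mem_hom {b : ℕ} {p : MvPolynomial (Fin n) ℝ}
    (hp : p ∈ homogeneousSubmodule (Fin n) ℝ (b + 2)) :
    lap p ∈ homogeneousSubmodule (Fin n) ℝ b := by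
  rw [lap_apply]
  exact Submodule.sum_mem _ fun i _ =>
    pderiv_isHomogeneous i (pderiv_isHomogeneous i hp)

theorem key_count (b : ℕ) (hn : 0 < n) :
    Module.finrank ℝ (harmonicHomogeneous n (b + 2))
      + Module.finrank ℝ (homogeneousSubmodule (Fin n) ℝ b)
      = Module.finrank ℝ (homogeneousSubmodule (Fin n) ℝ (b + 2)) := by
  classical
  set Va := homogeneousSubmodule (Fin n) ℝ (b + 2) with hVa
  set Vb := homogeneousSubmodule (Fin n) ℝ b with hVb
  set K := harmonicHomogeneous n (b + 2) with hK
  have hKdef : K = Va ⊓ LinearMap.ker (lap (n := n)) := rfl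
  -- multiplication by rsq
  set M : MvPolynomial (Fin n) ℝ →ₗ[ℝ] MvPolynomial (Fin n) ℝ :=
    LinearMap.mulLeft ℝ (rsq n) with hM
  have hMinj : Function.Injective M := by
    intro x y hxy
    exact mul_left_cancel₀ (rsq_ne_zero hn) hxy
  set W : Submodule ℝ (MvPolynomial (Fin n) ℝ) := Vb.map M with hW
  have hWVa : W ≤ Va := by
    rintro x ⟨q, hq, rfl⟩
    have h2 : (rsq n * q).IsHomogeneous (2 + b) := rsq_isHomogeneous.mul hq
    rw [add_comm] at h2
    simpa [M, LinearMap.mulLeft_apply, hVa] using h2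
  have hKVa : K ≤ Va := inf_le_left
  haveI : FiniteDimensional ℝ Va := fd_hom n (b + 2)
  haveI : FiniteDimensional ℝ Vb := fd_hom n b
  haveI : FiniteDimensional ℝ K := Submodule.finiteDimensional_of_le hKVa
  haveI : FiniteDimensional ℝ W := Submodule.finiteDimensional_of_le hWVa
  have hKW : K ⊓ W = ⊥ := by
    rw [Submodule.eq_bot_iff]
    rintro x ⟨hxK, q, hq, rfl⟩
    exact eq_zero_of_harmonic_rsq_mul (LinearMap.mem_ker.mp hxK.2) rfl
  have hWrank : Module.finrank ℝ W = Module.finrank ℝ Vb :=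
    (LinearEquiv.finrank_eq (Submodule.equivMapOfInjective M hMinj Vb)).symm
  -- inequality 1 : dim K + dim Vb ≤ dim Va
  have ineq1 : Module.finrank ℝ K + Module.finrank ℝ Vb ≤ Module.finrank ℝ Va := by
    rw [← hWrank]
    have := Submodule.finrank_sup_add_finrank_inf_eq K W
    rw [hKW] at this
    simp only [finrank_bot, add_zero] at this
    rw [← this]
    exact Submodule.finrank_mono (sup_le hKVa hWVa)
  -- inequality 2 : dim Va ≤ dim K + dim Vb (rank-nullity)
  have ineq2 : Module.finrank ℝ Va ≤ Module.finrank ℝ K + Module.finrank ℝ Vb := by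
    set f : Va →ₗ[ℝ] MvPolynomial (Fin n) ℝ := lap.comp Va.subtype with hf
    have hrn := LinearMap.finrank_range_add_finrank_ker f
    have hker : Module.finrank ℝ (LinearMap.ker f) = Module.finrank ℝ K := by
      rw [hf, LinearMap.ker_comp, ← Submodule.finrank_map_subtype_eq,
        Submodule.map_comap_subtype, hKdef]
    have hrange : Module.finrank ℝ (LinearMap.range f) ≤ Module.finrank ℝ Vb := by
      apply Submodule.finrank_mono
      rintro x ⟨y, rfl⟩
      exact lap_mem_hom y.2
    omega
  omega

theorem hom0_lap_zero {p : MvPolynomial (Fin n) ℝ} (hp : p.IsHomogeneous 0) (i : Fin n) :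
    pderiv i p = 0 := by
  rw [p.as_sum, map_sum]
  apply Finset.sum_eq_zero
  intro d hd
  have hd0 : d.degree = 0 := by
    rw [Finsupp.degree_eq_weight_one]; exact hp (mem_support_iff.mp hd)
  have hdi : d i = 0 := by have := Finsupp.le_degree i d; omega
  rw [pderiv_monomial, hdi]
  simp

theorem lap_zero_of_low {a : ℕ} (ha : a ≤ 1) {p : MvPolynomial (Fin n) ℝ}
    (hp : p.IsHomogeneous a) : lap p = 0 := by
  rw [lap_apply]
  apply Finset.sum_eq_zero
  intro i _
  interval_cases a
  · rw [hom0_lap_zero hp i, map_zero]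
  · exact hom0_lap_zero (pderiv_isHomogeneous i hp) i

theorem harm_low {a : ℕ} (ha : a ≤ 1) :
    harmonicHomogeneous n a = homogeneousSubmodule (Fin n) ℝ a := by
  refine le_antisymm inf_le_left (le_inf le_rfl ?_)
  intro p hp
  exact LinearMap.mem_ker.mpr (lap_zero_of_low ha hp)

theorem prod_Icc_asc (a m : ℕ) : ∏ j ∈ Finset.Icc 1 m, (a + j) = (a + 1).ascFactorial m := by
  induction m with
  | zero => simp
  | succ k ih =>
    rw [Finset.prod_Icc_succ_top (by omega), ih, Nat.ascFactorial_succ]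
    ring

theorem asc_shift (c m : ℕ) :
    (c + 1).ascFactorial (m + 2) = (c + 1) * (c + 2) * (c + 3).ascFactorial m := by
  induction m with
  | zero =>
    show (c+1).ascFactorial 2 = _
    rw [Nat.ascFactorial_succ, Nat.ascFactorial_succ, Nat.ascFactorial_zero,
      Nat.ascFactorial_zero]
    ring
  | succ k ih =>
    rw [show k + 1 + 2 = (k + 2) + 1 from rfl, Nat.ascFactorial_succ, ih,
      Nat.ascFactorial_succ]
    ring

/-- Dimension formula for the space `H_a` of degree-`a` harmonic polynomials in `n ≥ 3`
variables: `(n−2)! · dim H_a = (2a + n − 2) · ∏_{j=1}^{n−3} (a + j)`. -/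
theorem finrank_harmonicHomogeneous (n a : ℕ) (hn : 3 ≤ n) :
    (n - 2).factorial * Module.finrank ℝ (harmonicHomogeneous n a) =
      (2 * a + n - 2) * ∏ j ∈ Finset.Icc 1 (n - 3), (a + j) := by
  obtain ⟨m, rfl⟩ : ∃ m, n = m + 3 := ⟨n - 3, by omega⟩
  have hsimp : m + 3 - 2 = m + 1 := by omega
  have hsimp3 : m + 3 - 3 = m := by omega
  rw [hsimp, hsimp3, prod_Icc_asc]
  match a with
  | 0 =>
    rw [harm_low (by omega), finrank_hom]
    simp only [Nat.add_zero, Nat.choose_zero_right, mul_one, Nat.zero_add,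
      Nat.one_ascFactorial, Nat.mul_zero]
    rw [show m + 3 - 2 = m + 1 from by omega]
    exact Nat.factorial_succ m
  | 1 =>
    rw [harm_low (by omega), finrank_hom]
    rw [show m + 3 + 1 - 1 = m + 3 from by omega, Nat.choose_one_right,
      show 2 * 1 + (m + 3) - 2 = m + 3 from by omega]
    have h2 : (1 + 1).ascFactorial m = (m + 1).factorial := by
      simpa [Nat.add_comm] using Nat.factorial_mul_ascFactorial 1 m
    rw [h2]
    ring
  | (c + 2) =>
    have hkey := key_count (n := m + 3) c (by omega)
    -- finrank harmonic + F c = F (c+2)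
    rw [finrank_hom, finrank_hom] at hkey
    set DK := Module.finrank ℝ (harmonicHomogeneous (m + 3) (c + 2)) with hDK
    have hFc : (m + 3 + c - 1).choose c = (m + c + 2).choose (m + 2) := by
      rw [show m + 3 + c - 1 = m + c + 2 from by omega, ← Nat.choose_symm (by omega),
        show m + c + 2 - c = m + 2 from by omega]
    have hFc2 : (m + 3 + (c + 2) - 1).choose (c + 2) = (m + c + 4).choose (m + 2) := by
      rw [show m + 3 + (c + 2) - 1 = m + c + 4 from by omega,
        ← Nat.choose_symm (by omega), show m + c + 4 - (c + 2) = m + 2 from by omega]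
    rw [hFc, hFc2] at hkey
    -- multiply by (m+2)!
    have hmul := congrArg (fun t => (m + 2).factorial * t) hkey
    simp only [Nat.mul_add] at hmul
    have e1 : (m + 2).factorial * (m + c + 2).choose (m + 2) = (c + 1).ascFactorial (m + 2) := by
      rw [Nat.ascFactorial_eq_factorial_mul_choose, show c + (m + 2) = m + c + 2 from by omega]
    have e2 : (m + 2).factorial * (m + c + 4).choose (m + 2) = (c + 3).ascFactorial (m + 2) := by
      rw [Nat.ascFactorial_eq_factorial_mul_choose, show c + 2 + (m + 2) = m + c + 4 from by omega]
    rw [e1, e2, asc_shift] at hmul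
    have e3 : (c + 3).ascFactorial (m + 2) = (c + m + 4) * ((c + m + 3) * (c + 3).ascFactorial m) := by
      rw [show m + 2 = (m + 1) + 1 from rfl, Nat.ascFactorial_succ, Nat.ascFactorial_succ]
      ring_nf
    rw [e3] at hmul
    set P := (c + 3).ascFactorial m with hP
    rw [show 2 * (c + 2) + (m + 3) - 2 = 2 * c + m + 5 from by omega]
    -- hmul : (m+2)! * DK + (c+1)*(c+2)*P = (c+m+4)*((c+m+3)*P)
    have hfact : (m + 2).factorial = (m + 2) * (m + 1).factorial := Nat.factorial_succ _
    apply Nat.eq_of_mul_eq_mul_left (show 0 < m + 2 from by omega)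
    rw [show (m + 2) * ((m + 1).factorial * DK) = (m + 2).factorial * DK from by
      rw [hfact]; ring]
    nlinarith [hmul]
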